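/- Under the relative error scoring function S(x,y) = |(x−y)/x| on (0,∞), the optimal point forecast for Y = Z² with Z having a t-distribution with mean 0, variance 1 and ν = 4 degrees of freedom is x̂ = 2/(2^{2/3} − 1): that is, x̂ is the median of the distribution with density on (0,∞) proportional to y^{1/2}(1 + y/2)^{−5/2}, and this median minimizes x ↦ E[|(x−Y)/x|] over x > 0. -/

import Mathlib

open MeasureTheory Set Filter Topology NNReal ENNReal

noncomputable def gf (y : ℝ) : ℝ := y ^ ((1:ℝ)/2) * (1 + y / 2) ^ (-(5:ℝ)/2)

noncomputable def Hf (y : ℝ) : ℝ := (2/3) * (2*y/(y+2)) ^ ((3:ℝ)/2)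

lemma hderivH : ∀ y ∈ Ioi (0:ℝ), HasDerivAt Hf (gf y) y := by
  intro y hy
  have hy0 : (0:ℝ) < y := hy
  have hy2 : (0:ℝ) < y + 2 := by linarith
  have hφ : HasDerivAt (fun y : ℝ => 2*y/(y+2)) (4/(y+2)^2) y := by
    have h1 : HasDerivAt (fun y : ℝ => 2*y) 2 y := by
      simpa using (hasDerivAt_id y).const_mul (2:ℝ)
    have h2 : HasDerivAt (fun y : ℝ => y+2) 1 y := (hasDerivAt_id y).add_const 2
    have := h1.div h2 (by linarith)
    refine this.congr_deriv ?_
    symm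
    ring
  have hφpos : (0:ℝ) < 2*y/(y+2) := by positivity
  have hr : HasDerivAt (fun t : ℝ => t ^ ((3:ℝ)/2)) ((3/2) * (2*y/(y+2)) ^ ((1:ℝ)/2)) (2*y/(y+2)) := by
    have := Real.hasDerivAt_rpow_const (x := 2*y/(y+2)) (p := (3:ℝ)/2) (Or.inl hφpos.ne')
    convert this using 1
    norm_num
  have := (hr.comp y hφ).const_mul (2/3:ℝ)
  refine this.congr_deriv ?_
  symm
  rw [gf]
  have e1 : (2*y/(y+2)) ^ ((1:ℝ)/2) = (2*y) ^ ((1:ℝ)/2) / (y+2) ^ ((1:ℝ)/2) := by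
    rw [Real.div_rpow (by positivity) hy2.le]
  have e2 : (2*y:ℝ) ^ ((1:ℝ)/2) = 2 ^ ((1:ℝ)/2) * y ^ ((1:ℝ)/2) := by
    rw [Real.mul_rpow (by norm_num) hy0.le]
  have e3 : (1 + y/2 : ℝ) = (y+2)/2 := by ring
  have e4 : (1 + y/2 : ℝ) ^ (-(5:ℝ)/2) = (y+2) ^ (-(5:ℝ)/2) / 2 ^ (-(5:ℝ)/2) := by
    rw [e3, Real.div_rpow hy2.le (by norm_num)]
  rw [e4, e1, e2]
  rw [show -(5:ℝ)/2 = -((5:ℝ)/2) by norm_num, Real.rpow_neg hy2.le,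
    Real.rpow_neg (by norm_num : (0:ℝ) ≤ 2)]
  have h52 : (y+2) ^ ((5:ℝ)/2) = (y+2) ^ ((1:ℝ)/2) * (y+2)^2 := by
    rw [← Real.rpow_natCast (y+2) 2, ← Real.rpow_add hy2]
    norm_num
  have h2ne : (2:ℝ) ^ ((5:ℝ)/2) = 2 ^ ((1:ℝ)/2) * 4 := by
    rw [show (4:ℝ) = 2^(2:ℕ) by norm_num, ← Real.rpow_natCast 2 2, ← Real.rpow_add (by norm_num)]
    norm_num
  have hne1 : ((y+2):ℝ) ^ ((1:ℝ)/2) ≠ 0 := by positivity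
  have hne2 : ((y+2):ℝ) ^ ((5:ℝ)/2) ≠ 0 := by positivity
  field_simp
  rw [h52, h2ne]
  ring

lemma hcontH : ContinuousWithinAt Hf (Ici 0) 0 := by
  apply ContinuousAt.continuousWithinAt
  have h1 : ContinuousAt (fun y : ℝ => 2*y/(y+2)) 0 := by
    apply ContinuousAt.div (by fun_prop) (by fun_prop)
    norm_num
  have h2 : ContinuousAt (fun t : ℝ => t ^ ((3:ℝ)/2)) ((fun y : ℝ => 2*y/(y+2)) 0) := by
    apply Real.continuousAt_rpow_const
    right; norm_num
  exact (ContinuousAt.comp (g := fun t : ℝ => t ^ ((3:ℝ)/2)) (f := fun y : ℝ => 2*y/(y+2)) h2 h1).const_mul _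

lemma htendH : Tendsto Hf atTop (𝓝 ((2/3) * 2 ^ ((3:ℝ)/2))) := by
  have h0 : Tendsto (fun y : ℝ => 2*y/(y+2)) atTop (𝓝 2) := by
    have h1 : Tendsto (fun y : ℝ => 2 - 4/(y+2)) atTop (𝓝 (2 - 0)) := by
      apply tendsto_const_nhds.sub
      exact Tendsto.div_atTop tendsto_const_nhds (tendsto_atTop_add_const_right _ 2 tendsto_id)
    rw [sub_zero] at h1
    apply h1.congr'
    filter_upwards [eventually_gt_atTop (0:ℝ)] with y hy
    field_simp
    ring
  have h2 : ContinuousAt (fun t : ℝ => t ^ ((3:ℝ)/2)) 2 := by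
    apply Real.continuousAt_rpow_const
    left; norm_num
  exact ((h2.tendsto.comp h0).const_mul _).congr (fun y => rfl)

lemma gnonneg : ∀ y ∈ Ioi (0:ℝ), 0 ≤ gf y := by
  intro y hy
  have : (0:ℝ) < y := hy
  rw [gf]
  positivity

lemma key_alg (xhat : ℝ) (hxhat : xhat = 2 / (2 ^ ((2:ℝ)/3) - 1)) :
    2 * xhat / (xhat + 2) = 2 ^ ((1:ℝ)/3) ∧ 0 < xhat := by
  set c : ℝ := 2 ^ ((2:ℝ)/3) with hc
  set b : ℝ := 2 ^ ((1:ℝ)/3) with hb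
  have hbc : b * c = 2 := by
    rw [hb, hc, ← Real.rpow_add (by norm_num)]
    norm_num
  have hc1 : 1 < c := by
    rw [hc]
    apply Real.one_lt_rpow_iff_of_pos (by norm_num) |>.2
    constructor <;> norm_num
  have hb0 : 0 < b := by rw [hb]; positivity
  have hd : (0:ℝ) < c - 1 := by linarith
  have hm0 : 0 < xhat := by rw [hxhat]; exact div_pos (by norm_num) hd
  refine ⟨?_, hm0⟩
  have h1 : xhat * (c - 1) = 2 := by rw [hxhat]; field_simp
  have hm2 : xhat + 2 ≠ 0 := by positivity
  rw [div_eq_iff hm2]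
  have h3 : (2 * xhat - b * (xhat + 2)) * (c - 1) = 0 := by nlinarith [hbc, h1]
  have := mul_eq_zero.1 h3
  rcases this with h | h
  · linarith
  · linarith

lemma part1 (xhat : ℝ) (hxhat : xhat = 2 / (2 ^ ((2:ℝ)/3) - 1)) :
    (∫ y in Ioc (0:ℝ) xhat, gf y) = (2/3) * 2 ^ ((1:ℝ)/2) ∧
    (∫ y in Ioi xhat, gf y) = (2/3) * 2 ^ ((1:ℝ)/2) ∧
    IntegrableOn gf (Ioi (0:ℝ)) ∧ 0 < xhat := by
  obtain ⟨halg, hm0⟩ := key_alg xhat hxhat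
  have hHm : Hf xhat = (2/3) * 2 ^ ((1:ℝ)/2) := by
    rw [Hf, halg, ← Real.rpow_mul (by norm_num : (0:ℝ) ≤ 2)]
    norm_num
  have hH0 : Hf 0 = 0 := by
    have h : (2*(0:ℝ)/(0+2)) = 0 := by norm_num
    rw [Hf, h, Real.zero_rpow (by norm_num), mul_zero]
  have hLval : (2:ℝ)/3 * (2:ℝ) ^ ((3:ℝ)/2) = 2 * ((2:ℝ)/3 * (2:ℝ) ^ ((1:ℝ)/2)) := by
    rw [show ((3:ℝ)/2) = 1 + 1/2 by norm_num, Real.rpow_add (by norm_num : (0:ℝ) < 2), Real.rpow_one]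
    ring
  have hI2 : (∫ y in Ioi xhat, gf y) = (2/3) * 2 ^ ((1:ℝ)/2) := by
    have hcont : ContinuousWithinAt Hf (Ici xhat) xhat :=
      ((hderivH xhat hm0).continuousAt).continuousWithinAt
    rw [integral_Ioi_of_hasDerivAt_of_nonneg hcont
      (fun y hy => hderivH y (lt_trans hm0 hy)) (fun y hy => gnonneg y (lt_trans hm0 hy)) htendH,
      hHm, hLval]
    ring
  have hI1 : (∫ y in Ioi (0:ℝ), gf y) = (2/3) * 2 ^ ((3:ℝ)/2) := by
    rw [integral_Ioi_of_hasDerivAt_of_nonneg hcontH hderivH gnonneg htendH, hH0, sub_zero]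
  have hint : IntegrableOn gf (Ioi (0:ℝ)) :=
    integrableOn_Ioi_deriv_of_nonneg hcontH hderivH gnonneg htendH
  have hsplit : (∫ y in Ioc (0:ℝ) xhat, gf y) + (∫ y in Ioi xhat, gf y) = ∫ y in Ioi (0:ℝ), gf y := by
    rw [← setIntegral_union (Ioc_disjoint_Ioi le_rfl) measurableSet_Ioi
      (hint.mono_set (Ioc_subset_Ioi_self.trans (by simp))) (hint.mono_set (Ioi_subset_Ioi hm0.le)),
      Ioc_union_Ioi_eq_Ioi hm0.le]
  refine ⟨?_, hI2, hint, hm0⟩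
  have := hsplit
  rw [hI1, hI2, hLval] at this
  linarith

noncomputable def f₀ (y : ℝ) : ℝ := y ^ (-(1:ℝ)/2) * (1 + y / 2) ^ (-(5:ℝ)/2)

lemma hf₀m : Measurable f₀ := by
  unfold f₀; fun_prop

lemma f₀_mul (y : ℝ) (hy : 0 < y) : f₀ y * y = gf y := by
  have h : y ^ (-(1:ℝ)/2) * y ^ (1:ℝ) = y ^ ((1:ℝ)/2) := by
    rw [← Real.rpow_add hy]; norm_num
  rw [Real.rpow_one] at h
  rw [f₀, gf, mul_comm (y ^ (-(1:ℝ)/2)), mul_assoc, h]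
  ring


lemma f₀_nonneg (y : ℝ) (hy : 0 < y) : 0 ≤ f₀ y := by
  rw [f₀]; positivity

lemma pointwise_key (x m y : ℝ) (hx : 0 < x) (hm : 0 < m) (hy : 0 < y) :
    |(m - y)/m| + (1/x - 1/m) * (if m ≤ y then y else -y) ≤ |(x - y)/x| := by
  rw [abs_div, abs_div, abs_of_pos hx, abs_of_pos hm]
  by_cases h : m ≤ y
  · rw [if_pos h, abs_of_nonpos (by linarith : m - y ≤ 0)]
    have e : -(m-y)/m + (1/x - 1/m) * y = (y - x)/x := by field_simp; ring
    rw [e]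
    gcongr
    rw [abs_sub_comm]; exact le_abs_self _
  · rw [if_neg h, abs_of_nonneg (by push_neg at h; linarith : (0:ℝ) ≤ m - y)]
    have e : (m-y)/m + (1/x - 1/m) * (-y) = (x - y)/x := by field_simp; ring
    rw [e]
    gcongr
    exact le_abs_self _

lemma part2
    (f : ℝ → ℝ)
    (hf : ∀ y : ℝ, 0 < y →
      f y = y ^ (-(1:ℝ)/2) * (1 + y / 2) ^ (-(5:ℝ)/2))
    (P : Measure ℝ) [IsProbabilityMeasure P]
    (hP : ∀ A : Set ℝ, MeasurableSet A →
      P A = (∫⁻ y in Ioi (0:ℝ), ENNReal.ofReal (f y))⁻¹ *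
        ∫⁻ y in A ∩ Ioi (0:ℝ), ENNReal.ofReal (f y))
    (xhat : ℝ) (hm0 : 0 < xhat)
    (hgInt : IntegrableOn gf (Ioi (0:ℝ)))
    (hIoc : (∫ y in Ioc (0:ℝ) xhat, gf y) = (2/3) * 2 ^ ((1:ℝ)/2))
    (hIoi : (∫ y in Ioi xhat, gf y) = (2/3) * 2 ^ ((1:ℝ)/2)) :
    ∀ x ∈ Ioi (0:ℝ),
      ∫ y, |(xhat - y) / xhat| ∂P ≤ ∫ y, |(x - y) / x| ∂P := by
  intro x hx
  have hx0 : (0:ℝ) < x := hx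
  set c : ℝ≥0∞ := ∫⁻ y in Ioi (0:ℝ), ENNReal.ofReal (f y) with hcdef
  set d : ℝ → ℝ≥0 := fun y => (f₀ y).toNNReal with hddef
  have hd : Measurable d := measurable_real_toNNReal.comp hf₀m
  set ν : Measure ℝ := volume.restrict (Ioi (0:ℝ)) with hνdef
  set μ : Measure ℝ := ν.withDensity (fun y => (d y : ℝ≥0∞)) with hμdef
  -- μ agrees with the lintegral in hP
  have hAe : ∀ A : Set ℝ, MeasurableSet A →
      (∫⁻ y in A ∩ Ioi (0:ℝ), ENNReal.ofReal (f y)) = μ A := by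
    intro A hA
    rw [hμdef, withDensity_apply _ hA, hνdef, Measure.restrict_restrict hA]
    apply setLIntegral_congr_fun (hA.inter measurableSet_Ioi)
    intro y hy
    beta_reduce
    rw [hf y hy.2]
    rfl
  have hcμ : c = μ univ := by
    rw [hcdef, ← hAe univ MeasurableSet.univ, univ_inter]
  have hPeq : P = c⁻¹ • μ := by
    ext A hA
    rw [hP A hA, hAe A hA, Measure.smul_apply, smul_eq_mul]
  have hone : (1:ℝ≥0∞) = c⁻¹ * c := by
    have h := hP univ MeasurableSet.univ
    rw [measure_univ, univ_inter] at h
    exact h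
  have hc0 : c ≠ 0 := by
    intro h; rw [h, mul_zero] at hone; exact one_ne_zero hone
  have hctop : c ≠ ⊤ := by
    intro h; rw [h, ENNReal.inv_top, zero_mul] at hone; exact one_ne_zero hone
  -- the "score balancing" function σ
  set σ : ℝ → ℝ := fun y => if xhat ≤ y then y else -y with hσdef
  have hσm : Measurable σ := by
    apply Measurable.ite (measurableSet_le measurable_const measurable_id)
      measurable_id measurable_id.neg
  -- integrand wrt ν
  set F₀ : ℝ → ℝ := fun y => if xhat ≤ y then gf y else -gf y with hF₀def
  have hgfm : Measurable gf := by unfold gf; fun_prop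
  have hF₀m : Measurable F₀ := by
    apply Measurable.ite (measurableSet_le measurable_const measurable_id) hgfm hgfm.neg
  have hF₀int : Integrable F₀ ν := by
    apply Integrable.mono' hgInt.abs hF₀m.aestronglyMeasurable
    apply ae_of_all
    intro y
    rw [hF₀def]
    by_cases h : xhat ≤ y <;> simp [h, abs_le_abs, le_abs_self, neg_abs_le]
  have hdsmul : (fun y => d y • σ y) =ᵐ[ν] F₀ := by
    filter_upwards [ae_restrict_mem (μ := volume) (s := Ioi (0:ℝ)) measurableSet_Ioi] with y hy
    have hy0 : (0:ℝ) < y := hy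
    have hdv : (d y : ℝ) = f₀ y := by
      rw [hddef]; exact Real.coe_toNNReal _ (f₀_nonneg y hy0)
    rw [hσdef, hF₀def]
    by_cases h : xhat ≤ y
    · simp only [if_pos h, NNReal.smul_def, smul_eq_mul, hdv]
      exact f₀_mul y hy0
    · simp only [if_neg h, NNReal.smul_def, smul_eq_mul, hdv, mul_neg]
      rw [f₀_mul y hy0]
  have hdσint : Integrable (fun y => d y • σ y) ν := hF₀int.congr hdsmul.symm
  -- integrability of σ wrt P
  have hσP : Integrable σ P := by
    rw [hPeq]
    rw [integrable_smul_measure (by simp [hctop]) (by simp [hc0])]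
    exact (integrable_withDensity_iff_integrable_smul hd).2 hdσint
  -- ∫ σ dP = 0
  have hσzero : ∫ y, σ y ∂P = 0 := by
    rw [hPeq, integral_smul_measure, integral_withDensity_eq_integral_smul hd σ]
    have hsplit : ∫ y, d y • σ y ∂ν = ∫ y, F₀ y ∂ν := integral_congr_ae hdsmul
    rw [hsplit]
    have hunion : (∫ y in Ioc (0:ℝ) xhat, F₀ y) + (∫ y in Ioi xhat, F₀ y)
        = ∫ y in Ioi (0:ℝ), F₀ y := by
      rw [← setIntegral_union (Ioc_disjoint_Ioi le_rfl) measurableSet_Ioi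
        ((hF₀int.mono_measure (Measure.restrict_mono (Ioc_subset_Ioi_self.trans (by simp)) le_rfl)))
        ((hF₀int.mono_measure (Measure.restrict_mono (Ioi_subset_Ioi hm0.le) le_rfl))),
        Ioc_union_Ioi_eq_Ioi hm0.le]
    have hne : ∀ᵐ y : ℝ, y ≠ xhat := by
      rw [ae_iff]
      simp only [not_not, setOf_eq_eq_singleton]
      exact measure_singleton xhat
    have hIoc' : (∫ y in Ioc (0:ℝ) xhat, F₀ y) = - ∫ y in Ioc (0:ℝ) xhat, gf y := by
      rw [← integral_neg]
      apply setIntegral_congr_ae measurableSet_Ioc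
      filter_upwards [hne] with y hy hmem
      rw [hF₀def]
      simp only [if_neg (not_le.mpr (lt_of_le_of_ne hmem.2 hy))]
    have hIoi' : (∫ y in Ioi xhat, F₀ y) = ∫ y in Ioi xhat, gf y := by
      apply setIntegral_congr_fun measurableSet_Ioi
      intro y hy
      rw [hF₀def]
      simp only [if_pos (le_of_lt (mem_Ioi.mp hy))]
    have : ∫ y, F₀ y ∂ν = 0 := by
      rw [hνdef, ← hunion, hIoc', hIoi', hIoc, hIoi]
      ring
    rw [this, smul_zero]
  -- a.e. positivity
  have haePos : ∀ᵐ y ∂P, y ∈ Ioi (0:ℝ) := by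
    have h0 : P ((Ioi (0:ℝ))ᶜ) = 0 := by
      rw [hP _ measurableSet_Ioi.compl, compl_inter_self]
      simp
    rw [ae_iff]
    simpa [compl_def] using h0
  -- integrability of the scores
  have habs : Integrable (fun y => |y|) P := by
    have he : (fun y => |σ y|) = fun y => |y| := by
      funext y
      rw [hσdef]
      by_cases h : xhat ≤ y <;> simp [h, abs_neg]
    exact he ▸ hσP.abs
  have hS : ∀ z : ℝ, 0 < z → Integrable (fun y => |(z - y)/z|) P := by
    intro z hz
    apply Integrable.mono' ((integrable_const (1:ℝ)).add (habs.mul_const z⁻¹))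
      (((continuous_const.sub continuous_id).div_const z).abs.aestronglyMeasurable)
    apply ae_of_all
    intro y
    simp only [Pi.add_apply, id_eq]
    rw [Real.norm_eq_abs, abs_abs, abs_div, abs_of_pos hz]
    have h1 : |z - y| ≤ z + |y| := by
      have := norm_sub_le z y
      rw [Real.norm_eq_abs, Real.norm_eq_abs, abs_of_pos hz] at this
      exact this
    have h2 : (z + |y|)/z = 1 + |y| * z⁻¹ := by
      field_simp
    rw [← h2]
    gcongr
    exact h1
  -- pointwise inequality, a.e.
  have hkey : ∀ᵐ y ∂P, |(xhat - y)/xhat| + (1/x - 1/xhat) * σ y ≤ |(x - y)/x| := by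
    filter_upwards [haePos] with y hy
    have := pointwise_key x xhat y hx0 hm0 hy
    simpa [hσdef] using this
  have hintL : Integrable (fun y => |(xhat - y)/xhat| + (1/x - 1/xhat) * σ y) P :=
    (hS xhat hm0).add (hσP.const_mul _)
  have hmono := integral_mono_ae hintL (hS x hx0) hkey
  rw [integral_add (hS xhat hm0) (hσP.const_mul _), integral_const_mul, hσzero,
    mul_zero, add_zero] at hmono
  exact hmono


theorem relative_error_optimal_forecast_t4
    (f : ℝ → ℝ)
    (hf : ∀ y : ℝ, 0 < y →
      f y = y ^ (-(1:ℝ)/2) * (1 + y / 2) ^ (-(5:ℝ)/2))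
    (P : Measure ℝ) [IsProbabilityMeasure P]
    (hP : ∀ A : Set ℝ, MeasurableSet A →
      P A = (∫⁻ y in Ioi (0:ℝ), ENNReal.ofReal (f y))⁻¹ *
        ∫⁻ y in A ∩ Ioi (0:ℝ), ENNReal.ofReal (f y))
    (xhat : ℝ) (hxhat : xhat = 2 / (2 ^ ((2:ℝ)/3) - 1)) :
    -- x̂ is the median of the distribution with density ∝ y^{1/2}(1+y/2)^{−5/2}:
    (∫ y in Ioc (0:ℝ) xhat, y ^ ((1:ℝ)/2) * (1 + y / 2) ^ (-(5:ℝ)/2)) =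
      (∫ y in Ioi xhat, y ^ ((1:ℝ)/2) * (1 + y / 2) ^ (-(5:ℝ)/2)) ∧
    -- and x̂ minimizes the expected relative error over x > 0:
    (∀ x ∈ Ioi (0:ℝ),
      ∫ y, |(xhat - y) / xhat| ∂P ≤ ∫ y, |(x - y) / x| ∂P) := by
  obtain ⟨hIoc, hIoi, hgInt, hm0⟩ := part1 xhat hxhat
  constructor
  · show (∫ y in Ioc (0:ℝ) xhat, gf y) = (∫ y in Ioi xhat, gf y)
    rw [hIoc, hIoi]
  · exact part2 f hf P hP xhat hm0 hgInt hIoc hIoi
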